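/- Let ψ : ℝⁿ → ℝ be integrable, bounded, strictly positive almost everywhere, and suppose there exist C > 0 and s > n/2 such that ψ(λ) ≤ C·(1 + ‖λ‖²)^{−s} for almost every λ ∈ ℝⁿ. Then there exists a constant κ > 0 such that every f ∈ L²(ℝⁿ, ℂ) with 𝓕f/√ψ ∈ L²(ℝⁿ, ℂ) has a bounded continuous representative f̃ (namely f̃(x) = ∫_{ℝⁿ} 𝓕f(λ) e^{2πi⟨x,λ⟩} dλ) satisfying sup_{x ∈ ℝⁿ} |f̃(x)| ≤ κ · ‖𝓕f/√ψ‖_{L²}. -/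

import Mathlib

open MeasureTheory Complex Real
open scoped FourierTransform

set_option maxHeartbeats 1000000

/-- Let `F` be the Fourier–Plancherel transform on `L²(ℝⁿ, ℂ)` (any unitary
operator agreeing with the Fourier integral on `L¹ ∩ L²`). Let `ψ : ℝⁿ → ℝ` be integrable,
bounded, a.e. strictly positive, with `ψ λ ≤ C (1 + ‖λ‖²)^{-s}` a.e. for some `C > 0` and
`s > n/2`. Then there is `κ > 0` such that every `f ∈ L²` with `F f / √ψ ∈ L²` has a bounded
continuous representative `f̃ z = ∫ λ, F f λ * exp(2πi⟪z,λ⟫)` with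
`sup_x ‖f̃ x‖ ≤ κ · ‖F f / √ψ‖_{L²}`. -/
theorem rkhs_embeds_into_bounded_continuous
    {n : ℕ}
    (F : Lp ℂ 2 (volume : Measure (EuclideanSpace ℝ (Fin n))) ≃ₗᵢ[ℂ]
         Lp ℂ 2 (volume : Measure (EuclideanSpace ℝ (Fin n))))
    (hF : ∀ (g : EuclideanSpace ℝ (Fin n) → ℂ) (hg1 : Integrable g)
      (hg2 : MemLp g 2 (volume : Measure (EuclideanSpace ℝ (Fin n)))),
      (F (hg2.toLp g) : EuclideanSpace ℝ (Fin n) → ℂ) =ᵐ[volume] 𝓕 g)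
    (ψ : EuclideanSpace ℝ (Fin n) → ℝ)
    (hψi : Integrable ψ (volume : Measure (EuclideanSpace ℝ (Fin n))))
    (hψb : ∃ C : ℝ, ∀ l, |ψ l| ≤ C)
    (hψ0 : ∀ᵐ l ∂(volume : Measure (EuclideanSpace ℝ (Fin n))), 0 < ψ l)
    (C s : ℝ) (hC : 0 < C) (hs : (n : ℝ) / 2 < s)
    (hdec : ∀ᵐ l ∂(volume : Measure (EuclideanSpace ℝ (Fin n))),
      ψ l ≤ C * (1 + ‖l‖ ^ 2) ^ (-s)) :
    ∃ κ : ℝ, 0 < κ ∧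
      ∀ (f : EuclideanSpace ℝ (Fin n) → ℂ)
        (hf2 : MemLp f 2 (volume : Measure (EuclideanSpace ℝ (Fin n)))),
        MemLp (fun l => (F (hf2.toLp f) : EuclideanSpace ℝ (Fin n) → ℂ) l /
            ((Real.sqrt (ψ l) : ℝ) : ℂ)) 2 (volume : Measure (EuclideanSpace ℝ (Fin n))) →
          Integrable (fun l => (F (hf2.toLp f) : EuclideanSpace ℝ (Fin n) → ℂ) l)
            (volume : Measure (EuclideanSpace ℝ (Fin n))) ∧
          Continuous (fun z : EuclideanSpace ℝ (Fin n) =>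
            ∫ l : EuclideanSpace ℝ (Fin n),
              (F (hf2.toLp f) : EuclideanSpace ℝ (Fin n) → ℂ) l *
                Complex.exp (2 * (π : ℂ) * Complex.I * ((inner ℝ z l : ℝ) : ℂ))) ∧
          (f =ᵐ[volume] fun z : EuclideanSpace ℝ (Fin n) =>
            ∫ l : EuclideanSpace ℝ (Fin n),
              (F (hf2.toLp f) : EuclideanSpace ℝ (Fin n) → ℂ) l *
                Complex.exp (2 * (π : ℂ) * Complex.I * ((inner ℝ z l : ℝ) : ℂ))) ∧
          ∀ x : EuclideanSpace ℝ (Fin n),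
            ‖∫ l : EuclideanSpace ℝ (Fin n),
                (F (hf2.toLp f) : EuclideanSpace ℝ (Fin n) → ℂ) l *
                  Complex.exp (2 * (π : ℂ) * Complex.I * ((inner ℝ x l : ℝ) : ℂ))‖ ≤
              κ * (eLpNorm (fun l => (F (hf2.toLp f) : EuclideanSpace ℝ (Fin n) → ℂ) l /
                    ((Real.sqrt (ψ l) : ℝ) : ℂ)) 2
                  (volume : Measure (EuclideanSpace ℝ (Fin n)))).toReal := by
  classical
  refine ⟨Real.sqrt (∫ l, ψ l) + 1, by positivity, ?_⟩
  intro f hf2 hh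
  set G := F (hf2.toLp f) with hG
  set h : EuclideanSpace ℝ (Fin n) → ℂ :=
    fun l => (G : EuclideanSpace ℝ (Fin n) → ℂ) l / ((Real.sqrt (ψ l) : ℝ) : ℂ) with hhdef
  have hgm : AEStronglyMeasurable (G : EuclideanSpace ℝ (Fin n) → ℂ) volume :=
    Lp.aestronglyMeasurable G
  -- a.e. factorization
  have hsq : ∀ᵐ l ∂(volume : Measure (EuclideanSpace ℝ (Fin n))),
      (G : EuclideanSpace ℝ (Fin n) → ℂ) l = h l * ((Real.sqrt (ψ l) : ℝ) : ℂ) := by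
    filter_upwards [hψ0] with l hl
    have : ((Real.sqrt (ψ l) : ℝ) : ℂ) ≠ 0 :=
      Complex.ofReal_ne_zero.2 (ne_of_gt (Real.sqrt_pos.2 hl))
    simp only [hhdef, div_mul_cancel₀ _ this]
  -- sqrt ψ is in L²
  have hbm : AEStronglyMeasurable (fun l => Real.sqrt (ψ l)) volume :=
    Real.continuous_sqrt.comp_aestronglyMeasurable hψi.aestronglyMeasurable
  have hb2 : MemLp (fun l => Real.sqrt (ψ l)) 2 volume := by
    refine (memLp_two_iff_integrable_sq hbm).2 (hψi.congr ?_)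
    filter_upwards [hψ0] with l hl
    exact (Real.sq_sqrt hl.le).symm
  -- product integrable
  have hab : Integrable (fun l => ‖h l‖ * Real.sqrt (ψ l)) volume := by
    have := L2.integrable_inner (𝕜 := ℝ) (hh.norm.toLp _) (hb2.toLp _)
    refine this.congr ?_
    filter_upwards [MemLp.coeFn_toLp hh.norm, MemLp.coeFn_toLp hb2] with l h1 h2
    rw [h1, h2, RCLike.inner_apply]
    simp
    ring
  have hg1 : Integrable (fun l => (G : EuclideanSpace ℝ (Fin n) → ℂ) l) volume := by
    refine hab.mono' hgm ?_
    filter_upwards [hψ0, hsq] with l hl he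
    rw [he, norm_mul, Complex.norm_real, Real.norm_eq_abs,
      _root_.abs_of_nonneg (Real.sqrt_nonneg _)]
  -- the L¹ bound
  have key : ∫ l, ‖(G : EuclideanSpace ℝ (Fin n) → ℂ) l‖ ≤
      (Real.sqrt (∫ l, ψ l) + 1) * (eLpNorm h 2 volume).toReal := by
    have hpq : Real.HolderConjugate 2 2 := Real.holderConjugate_iff.mpr ⟨one_lt_two, by norm_num⟩
    have h2' : ENNReal.ofReal (2:ℝ) = 2 := by norm_num
    have hh2 : MemLp (fun l => ‖h l‖) (ENNReal.ofReal (2:ℝ)) volume := by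
      rw [h2']; exact hh.norm
    have hb2' : MemLp (fun l => Real.sqrt (ψ l)) (ENNReal.ofReal (2:ℝ)) volume := by
      rw [h2']; exact hb2
    have hhol := integral_mul_le_Lp_mul_Lq_of_nonneg (μ := volume) hpq
      (Filter.Eventually.of_forall fun l => norm_nonneg (h l))
      (Filter.Eventually.of_forall fun l => Real.sqrt_nonneg (ψ l)) hh2 hb2'
    have e1 : ∫ l, ‖(G : EuclideanSpace ℝ (Fin n) → ℂ) l‖
        = ∫ l, ‖h l‖ * Real.sqrt (ψ l) := by
      refine integral_congr_ae ?_
      filter_upwards [hψ0, hsq] with l hl he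
      rw [he, norm_mul, Complex.norm_real, Real.norm_eq_abs,
        _root_.abs_of_nonneg (Real.sqrt_nonneg _)]
    have e2 : ∫ l, Real.sqrt (ψ l) ^ (2:ℝ) = ∫ l, ψ l := by
      refine integral_congr_ae ?_
      filter_upwards [hψ0] with l hl
      rw [Real.rpow_two, Real.sq_sqrt hl.le]
    have e3 : (∫ l, ‖h l‖ ^ (2:ℝ)) ^ ((1:ℝ)/2) = (eLpNorm h 2 volume).toReal := by
      rw [hh.eLpNorm_eq_integral_rpow_norm two_ne_zero ENNReal.ofNat_ne_top,
        ENNReal.toReal_ofReal (Real.rpow_nonneg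
          (integral_nonneg fun l => Real.rpow_nonneg (norm_nonneg _) _) _)]
      norm_num
    have hN : 0 ≤ (eLpNorm h 2 volume).toReal := ENNReal.toReal_nonneg
    calc ∫ l, ‖(G : EuclideanSpace ℝ (Fin n) → ℂ) l‖
        = ∫ l, ‖h l‖ * Real.sqrt (ψ l) := e1
      _ ≤ (∫ l, ‖h l‖ ^ (2:ℝ)) ^ ((1:ℝ)/2) * (∫ l, Real.sqrt (ψ l) ^ (2:ℝ)) ^ ((1:ℝ)/2) := hhol
      _ = (eLpNorm h 2 volume).toReal * Real.sqrt (∫ l, ψ l) := by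
          rw [e2, e3, ← Real.sqrt_eq_rpow]
      _ ≤ (Real.sqrt (∫ l, ψ l) + 1) * (eLpNorm h 2 volume).toReal := by
          nlinarith [Real.sqrt_nonneg (∫ l, ψ l)]
  have hne : ∀ (z l : EuclideanSpace ℝ (Fin n)),
      ‖Complex.exp (2 * (π : ℂ) * Complex.I * ((inner ℝ z l : ℝ) : ℂ))‖ = 1 := by
    intro z l
    rw [show (2 * (π : ℂ) * Complex.I * ((inner ℝ z l : ℝ) : ℂ))
        = ((2 * π * (inner ℝ z l : ℝ) : ℝ) : ℂ) * Complex.I by push_cast; ring,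
      Complex.norm_exp_ofReal_mul_I]
  have hcont : Continuous (fun z : EuclideanSpace ℝ (Fin n) =>
      ∫ l : EuclideanSpace ℝ (Fin n), (G : EuclideanSpace ℝ (Fin n) → ℂ) l *
        Complex.exp (2 * (π : ℂ) * Complex.I * ((inner ℝ z l : ℝ) : ℂ))) := by
    refine continuous_of_dominated ?_ ?_ hg1.norm ?_
    · intro z
      exact hgm.mul (Continuous.aestronglyMeasurable (Complex.continuous_exp.comp
        (continuous_const.mul (Complex.continuous_ofReal.comp
          (Continuous.inner continuous_const continuous_id)))))
    · intro z
      refine Filter.Eventually.of_forall fun l => ?_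
      simp only [norm_mul, hne z l, mul_one, le_refl]
    · refine Filter.Eventually.of_forall fun l => ?_
      exact continuous_const.mul (Complex.continuous_exp.comp
        (continuous_const.mul (Complex.continuous_ofReal.comp
          (Continuous.inner continuous_id continuous_const))))
  refine ⟨hg1, hcont, ?_, ?_⟩
  · have hfl : LocallyIntegrable f volume := hf2.locallyIntegrable one_le_two
    have hul : LocallyIntegrable (fun z : EuclideanSpace ℝ (Fin n) =>
        ∫ l : EuclideanSpace ℝ (Fin n), (G : EuclideanSpace ℝ (Fin n) → ℂ) l *
          Complex.exp (2 * (π : ℂ) * Complex.I * ((inner ℝ z l : ℝ) : ℂ))) volume :=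
      hcont.locallyIntegrable
    refine ae_eq_of_integral_contDiff_smul_eq hfl hul ?_
    intro w hw hws
    set W : EuclideanSpace ℝ (Fin n) → ℂ := fun x => ((w x : ℝ) : ℂ) with hWdef
    have hWc : Continuous W := Complex.continuous_ofReal.comp hw.continuous
    have hWs : HasCompactSupport W := hws.comp_left Complex.ofReal_zero
    have hW1 : Integrable W volume := hWc.integrable_of_hasCompactSupport hWs
    have hW2 : MemLp W 2 volume := hWc.memLp_of_hasCompactSupport hWs
    have hFW := hF W hW1 hW2
    have hconj : ∀ l, (starRingEnd ℂ) (𝓕 W l)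
        = ∫ x, W x * Complex.exp (2 * (π : ℂ) * Complex.I * ((inner ℝ x l : ℝ) : ℂ)) := by
      intro l
      rw [Real.fourier_eq', ← integral_conj]
      refine integral_congr_ae (Filter.Eventually.of_forall fun v => ?_)
      simp only [smul_eq_mul, map_mul, ← Complex.exp_conj, Complex.conj_I,
        Complex.conj_ofReal, hWdef]
      rw [show ((((-2 * π * (inner ℝ v l : ℝ) : ℝ)) : ℂ) * (-Complex.I))
          = 2 * (π : ℂ) * Complex.I * ((inner ℝ v l : ℝ) : ℂ) by push_cast; ring]
      ring
    have L1 : ∫ x, w x • f x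
        = ∫ l, (starRingEnd ℂ) (𝓕 W l) * (G : EuclideanSpace ℝ (Fin n) → ℂ) l := by
      have e1 : ∫ x, w x • f x = inner (𝕜 := ℂ) (hW2.toLp W) (hf2.toLp f) := by
        rw [L2.inner_def]
        refine (integral_congr_ae ?_).symm
        filter_upwards [MemLp.coeFn_toLp hW2, MemLp.coeFn_toLp hf2] with x h1 h2
        rw [h1, h2, RCLike.inner_apply]
        simp only [hWdef, Complex.conj_ofReal, Complex.real_smul]
        ring
      have e2 : inner (𝕜 := ℂ) (hW2.toLp W) (hf2.toLp f)
          = inner (𝕜 := ℂ) (F (hW2.toLp W)) G := by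
        rw [hG, LinearIsometryEquiv.inner_map_map]
      have e3 : inner (𝕜 := ℂ) (F (hW2.toLp W)) G
          = ∫ l, (starRingEnd ℂ) (𝓕 W l) * (G : EuclideanSpace ℝ (Fin n) → ℂ) l := by
        rw [L2.inner_def]
        refine integral_congr_ae ?_
        filter_upwards [hFW] with l h1
        rw [RCLike.inner_apply, h1]
        ring
      rw [e1, e2, e3]
    have hprod : Integrable (fun p : (EuclideanSpace ℝ (Fin n)) × (EuclideanSpace ℝ (Fin n)) =>
        W p.1 * ((G : EuclideanSpace ℝ (Fin n) → ℂ) p.2 *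
          Complex.exp (2 * (π : ℂ) * Complex.I * ((inner ℝ p.1 p.2 : ℝ) : ℂ))))
        (volume.prod volume) := by
      refine (hW1.norm.mul_prod hg1.norm).mono' ?_ ?_
      · exact ((hWc.comp continuous_fst).aestronglyMeasurable).mul (hgm.comp_snd.mul
          (Continuous.aestronglyMeasurable (Complex.continuous_exp.comp (continuous_const.mul
            (Complex.continuous_ofReal.comp
              (Continuous.inner continuous_fst continuous_snd))))))
      · refine Filter.Eventually.of_forall fun p => ?_
        simp only [norm_mul, hne p.1 p.2, mul_one, le_refl]
    have R1 : ∫ x, w x • (∫ l : EuclideanSpace ℝ (Fin n),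
          (G : EuclideanSpace ℝ (Fin n) → ℂ) l *
            Complex.exp (2 * (π : ℂ) * Complex.I * ((inner ℝ x l : ℝ) : ℂ)))
        = ∫ l, (starRingEnd ℂ) (𝓕 W l) * (G : EuclideanSpace ℝ (Fin n) → ℂ) l := by
      calc ∫ x, w x • (∫ l : EuclideanSpace ℝ (Fin n),
              (G : EuclideanSpace ℝ (Fin n) → ℂ) l *
                Complex.exp (2 * (π : ℂ) * Complex.I * ((inner ℝ x l : ℝ) : ℂ)))
          = ∫ x, ∫ l : EuclideanSpace ℝ (Fin n), W x *
              ((G : EuclideanSpace ℝ (Fin n) → ℂ) l *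
                Complex.exp (2 * (π : ℂ) * Complex.I * ((inner ℝ x l : ℝ) : ℂ))) := by
            refine integral_congr_ae (Filter.Eventually.of_forall fun x => ?_)
            beta_reduce
            rw [Complex.real_smul, ← integral_const_mul]
        _ = ∫ l : EuclideanSpace ℝ (Fin n), ∫ x, W x *
              ((G : EuclideanSpace ℝ (Fin n) → ℂ) l *
                Complex.exp (2 * (π : ℂ) * Complex.I * ((inner ℝ x l : ℝ) : ℂ))) :=
            integral_integral_swap hprod
        _ = ∫ l, (starRingEnd ℂ) (𝓕 W l) * (G : EuclideanSpace ℝ (Fin n) → ℂ) l := by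
            refine integral_congr_ae (Filter.Eventually.of_forall fun l => ?_)
            calc ∫ x, W x * ((G : EuclideanSpace ℝ (Fin n) → ℂ) l *
                    Complex.exp (2 * (π : ℂ) * Complex.I * ((inner ℝ x l : ℝ) : ℂ)))
                = ∫ x, (W x * Complex.exp (2 * (π : ℂ) * Complex.I * ((inner ℝ x l : ℝ) : ℂ))) *
                    (G : EuclideanSpace ℝ (Fin n) → ℂ) l := by
                  refine integral_congr_ae (Filter.Eventually.of_forall fun x => ?_)
                  ring
              _ = (∫ x, W x * Complex.exp (2 * (π : ℂ) * Complex.I * ((inner ℝ x l : ℝ) : ℂ))) *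
                    (G : EuclideanSpace ℝ (Fin n) → ℂ) l := by rw [integral_mul_const]
              _ = (starRingEnd ℂ) (𝓕 W l) * (G : EuclideanSpace ℝ (Fin n) → ℂ) l := by
                  rw [hconj l]
    exact L1.trans R1.symm
  · intro x
    calc ‖∫ l : EuclideanSpace ℝ (Fin n), (G : EuclideanSpace ℝ (Fin n) → ℂ) l *
          Complex.exp (2 * (π : ℂ) * Complex.I * ((inner ℝ x l : ℝ) : ℂ))‖
        ≤ ∫ l, ‖(G : EuclideanSpace ℝ (Fin n) → ℂ) l *
            Complex.exp (2 * (π : ℂ) * Complex.I * ((inner ℝ x l : ℝ) : ℂ))‖ :=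
          norm_integral_le_integral_norm _
      _ = ∫ l, ‖(G : EuclideanSpace ℝ (Fin n) → ℂ) l‖ := by
          refine integral_congr_ae (Filter.Eventually.of_forall fun l => ?_)
          simp only [norm_mul, hne x l, mul_one]
      _ ≤ (Real.sqrt (∫ l, ψ l) + 1) * (eLpNorm h 2 volume).toReal := key
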